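/- Let f, g : F_q^d → F_q be linear bipermutive local rules given by coefficient vectors a, b ∈ F_q^d with a_1, a_d, b_1, b_d nonzero, with associated polynomials P_f(X) = a_1 + a_2 X + ... + a_d X^{d-1} and P_g(X) = b_1 + b_2 X + ... + b_d X^{d-1} in F_q[X]. Then the map H : F_q^{2n} → F_q^{2n} (n = d−1) defined by H(x‖y) = F(x‖y)‖G(x‖y) is bijective if and only if gcd(P_f, P_g) = 1. -/

import Mathlib

open Polynomial Finset in
private lemma stmt4_coeff_polyOf {K : Type*} [Semiring K] {N : ℕ} (c : Fin N → K) (u : ℕ) :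
    (∑ k : Fin N, C (c k) * X ^ (k : ℕ)).coeff u = if h : u < N then c ⟨u, h⟩ else 0 := by
  rw [finset_sum_coeff]
  simp only [coeff_C_mul, coeff_X_pow]
  split
  · next h =>
    rw [Finset.sum_eq_single (⟨u, h⟩ : Fin N)]
    · simp
    · intro b _ hb
      rw [if_neg, mul_zero]
      intro hub
      exact hb (Fin.ext hub.symm)
    · intro hmem; exact absurd (Finset.mem_univ _) hmem
  · next h =>
    apply Finset.sum_eq_zero
    intro k _
    rw [if_neg, mul_zero]
    intro huk
    exact h (huk ▸ k.isLt)

open Polynomial Finset in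
/-- Window coefficient formula: the coefficient at `2m+1-i` of `P_c * T_s` equals
the CA local sum `∑ j, c j * s (i+j)`, where `T_s` has the reversed entries of `s`. -/
private lemma stmt4_windowA {K : Type*} [Semiring K] {m : ℕ} (c : Fin (m + 2) → K)
    (s : Fin ((m + 1) + (m + 1)) → K) (i : Fin (m + 1)) :
    ((∑ j : Fin (m + 2), C (c j) * X ^ (j : ℕ)) *
      (∑ k : Fin ((m + 1) + (m + 1)),
        C (s ⟨2 * m + 1 - (k : ℕ), by omega⟩) * X ^ (k : ℕ))).coeff (2 * m + 1 - (i : ℕ)) =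
    ∑ j : Fin (m + 2), c j * s ⟨(i : ℕ) + (j : ℕ), by have := j.isLt; have := i.isLt; omega⟩ := by
  have hi := i.isLt
  rw [coeff_mul, Finset.Nat.sum_antidiagonal_eq_sum_range_succ_mk]
  rw [← Finset.sum_subset (Finset.range_subset_range.mpr (show m + 2 ≤ (2 * m + 1 - (i : ℕ)).succ by omega))
      (by
        intro p hp hnp
        simp only [Finset.mem_range] at hp hnp
        rw [stmt4_coeff_polyOf, dif_neg (by omega), zero_mul])]
  rw [← Fin.sum_univ_eq_sum_range]
  apply Finset.sum_congr rfl
  intro j _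
  have hj := j.isLt
  rw [stmt4_coeff_polyOf, stmt4_coeff_polyOf, dif_pos j.isLt,
    dif_pos (show 2 * m + 1 - (i : ℕ) - (j : ℕ) < (m + 1) + (m + 1) by omega)]
  congr 1
  exact congrArg s (Fin.ext (by simp only [Fin.val_mk]; omega))

open Polynomial Finset in
/-- Pairing formula: for `U` of degree at most `m`,
`(U*W).coeff (2m+1) = ∑ i, U.coeff i * W.coeff (2m+1-i)`. -/
private lemma stmt4_pairB {K : Type*} [Semiring K] {m : ℕ} {U : K[X]} (W : K[X])
    (hU : U.natDegree ≤ m) :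
    (U * W).coeff (2 * m + 1) =
      ∑ i : Fin (m + 1), U.coeff (i : ℕ) * W.coeff (2 * m + 1 - (i : ℕ)) := by
  rw [coeff_mul, Finset.Nat.sum_antidiagonal_eq_sum_range_succ_mk]
  rw [← Finset.sum_subset (Finset.range_subset_range.mpr (show m + 1 ≤ (2 * m + 1).succ by omega))
      (by
        intro p hp hnp
        simp only [Finset.mem_range] at hp hnp
        rw [coeff_eq_zero_of_natDegree_lt (by omega), zero_mul])]
  rw [← Fin.sum_univ_eq_sum_range]

open Polynomial in
/-- For linear bipermutive rules `f, g` of diameter `d = m + 2`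
with coefficient vectors `a, b` (nonzero first and last entries) and
associated polynomials `P_f, P_g` of degree `n = d - 1 = m + 1`, the
superposition map `H(x‖y) = F(x‖y) ‖ G(x‖y)` of the two no-boundary CA is
bijective iff `P_f` and `P_g` are coprime. -/
theorem stmt4 (K : Type*) [Field K] [Fintype K] (m : ℕ)
    (a b : Fin (m + 2) → K)
    (ha1 : a 0 ≠ 0) (had : a (Fin.last (m + 1)) ≠ 0)
    (hb1 : b 0 ≠ 0) (hbd : b (Fin.last (m + 1)) ≠ 0)
    (Pf Pg : K[X])
    (hPf : Pf = ∑ i : Fin (m + 2), C (a i) * X ^ (i : ℕ))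
    (hPg : Pg = ∑ i : Fin (m + 2), C (b i) * X ^ (i : ℕ))
    (H : (Fin ((m + 1) + (m + 1)) → K) → (Fin ((m + 1) + (m + 1)) → K))
    (hH : ∀ s : Fin ((m + 1) + (m + 1)) → K,
      H s = Fin.append
        (fun i : Fin (m + 1) => ∑ j : Fin (m + 2),
          a j * s ⟨i.val + j.val, by have := i.isLt; have := j.isLt; omega⟩)
        (fun i : Fin (m + 1) => ∑ j : Fin (m + 2),
          b j * s ⟨i.val + j.val, by have := i.isLt; have := j.isLt; omega⟩)) :
    Function.Bijective H ↔ IsCoprime Pf Pg := by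
  classical
  have hcPf : ∀ u, Pf.coeff u = if h : u < m + 2 then a ⟨u, h⟩ else 0 := fun u => by
    rw [hPf]; exact stmt4_coeff_polyOf a u
  have hcPg : ∀ u, Pg.coeff u = if h : u < m + 2 then b ⟨u, h⟩ else 0 := fun u => by
    rw [hPg]; exact stmt4_coeff_polyOf b u
  have hPf0 : Pf ≠ 0 := by
    intro h
    have := hcPf 0
    rw [h, coeff_zero, dif_pos (by omega)] at this
    exact ha1 (by simpa using this.symm)
  have hPg0 : Pg ≠ 0 := by
    intro h
    have := hcPg 0
    rw [h, coeff_zero, dif_pos (by omega)] at this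
    exact hb1 (by simpa using this.symm)
  have hPfdeg : Pf.natDegree = m + 1 := by
    refine le_antisymm (natDegree_le_iff_coeff_eq_zero.mpr fun N hN => by
      rw [hcPf, dif_neg (by omega)]) (le_natDegree_of_ne_zero ?_)
    rw [hcPf, dif_pos (by omega)]
    exact had
  have hPgdeg : Pg.natDegree = m + 1 := by
    refine le_antisymm (natDegree_le_iff_coeff_eq_zero.mpr fun N hN => by
      rw [hcPg, dif_neg (by omega)]) (le_natDegree_of_ne_zero ?_)
    rw [hcPg, dif_pos (by omega)]
    exact hbd
  constructor
  · -- Bijective → Coprime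
    intro hbij
    by_contra hnc
    set d := EuclideanDomain.gcd Pf Pg with hd
    have hdvd1 : d ∣ Pf := EuclideanDomain.gcd_dvd_left _ _
    have hdvd2 : d ∣ Pg := EuclideanDomain.gcd_dvd_right _ _
    have hdunit : ¬ IsUnit d := fun h => hnc (EuclideanDomain.gcd_isUnit_iff.mp h)
    have hd0 : d ≠ 0 := by
      intro h
      exact hPf0 (EuclideanDomain.gcd_eq_zero_iff.mp h).1
    have hddeg : 1 ≤ d.natDegree := by
      by_contra h
      push_neg at h
      interval_cases hdd : d.natDegree
      exact hdunit ((eq_C_of_natDegree_eq_zero hdd) ▸ isUnit_C.mpr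
        (isUnit_iff_ne_zero.mpr (fun hc => hd0 (by rw [eq_C_of_natDegree_eq_zero hdd, hc, map_zero]))))
    obtain ⟨cf, hcf⟩ := hdvd1
    obtain ⟨cg, hcg⟩ := hdvd2
    have hcf0 : cf ≠ 0 := fun h => hPf0 (by rw [hcf, h, mul_zero])
    have hcg0 : cg ≠ 0 := fun h => hPg0 (by rw [hcg, h, mul_zero])
    have hcfdeg : cf.natDegree ≤ m := by
      have h1 : Pf.natDegree = d.natDegree + cf.natDegree := by
        rw [hcf, natDegree_mul hd0 hcf0]
      omega
    have hcgdeg : cg.natDegree ≤ m := by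
      have h1 : Pg.natDegree = d.natDegree + cg.natDegree := by
        rw [hcg, natDegree_mul hd0 hcg0]
      omega
    have hkey : cg * Pf - cf * Pg = 0 := by rw [hcf, hcg]; ring
    set i₀ : Fin (m + 1) := ⟨cg.natDegree, by omega⟩ with hi₀
    obtain ⟨s, hs⟩ := hbij.2 (fun j => if j = Fin.castAdd (m + 1) i₀ then (1 : K) else 0)
    set T : K[X] := ∑ k : Fin ((m + 1) + (m + 1)),
      C (s ⟨2 * m + 1 - (k : ℕ), by omega⟩) * X ^ (k : ℕ) with hT
    have hF : ∀ i : Fin (m + 1), (H s) (Fin.castAdd (m + 1) i) = (Pf * T).coeff (2 * m + 1 - (i : ℕ)) := by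
      intro i
      rw [hH s, Fin.append_left, hPf, hT, stmt4_windowA]
    have hG : ∀ i : Fin (m + 1), (H s) (Fin.natAdd (m + 1) i) = (Pg * T).coeff (2 * m + 1 - (i : ℕ)) := by
      intro i
      rw [hH s, Fin.append_right, hPg, hT, stmt4_windowA]
    have hzero : (∑ i : Fin (m + 1), cg.coeff (i : ℕ) * (H s) (Fin.castAdd (m + 1) i))
        - (∑ i : Fin (m + 1), cf.coeff (i : ℕ) * (H s) (Fin.natAdd (m + 1) i)) = 0 := by
      simp only [hF, hG]
      rw [← stmt4_pairB (Pf * T) hcgdeg, ← stmt4_pairB (Pg * T) hcfdeg]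
      have : cg * (Pf * T) - cf * (Pg * T) = (cg * Pf - cf * Pg) * T := by ring
      rw [← coeff_sub, this, hkey, zero_mul, coeff_zero]
    have hval : (∑ i : Fin (m + 1), cg.coeff (i : ℕ) * (H s) (Fin.castAdd (m + 1) i))
        - (∑ i : Fin (m + 1), cf.coeff (i : ℕ) * (H s) (Fin.natAdd (m + 1) i))
        = cg.coeff cg.natDegree := by
      rw [hs]
      have h2 : ∀ i : Fin (m + 1),
          (if Fin.natAdd (m + 1) i = Fin.castAdd (m + 1) i₀ then (1 : K) else 0) = 0 := by
        intro i
        rw [if_neg]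
        intro h
        have := congrArg Fin.val h
        simp only [Fin.coe_natAdd, Fin.coe_castAdd, hi₀] at this
        have := i₀.isLt
        omega
      simp only [h2, mul_zero, Finset.sum_const_zero, sub_zero]
      rw [Finset.sum_eq_single i₀]
      · rw [if_pos rfl, mul_one]
      · intro i _ hi
        rw [if_neg (fun h => hi (Fin.castAdd_injective _ _ h)), mul_zero]
      · intro h; exact absurd (Finset.mem_univ _) h
    rw [hval] at hzero
    exact leadingCoeff_ne_zero.mpr hcg0 hzero
  · -- Coprime → Bijective
    intro hcop
    rw [← Finite.injective_iff_bijective]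
    intro s1 s2 heq
    set s : Fin ((m + 1) + (m + 1)) → K := fun j => s1 j - s2 j with hsdef
    set T : K[X] := ∑ k : Fin ((m + 1) + (m + 1)),
      C (s ⟨2 * m + 1 - (k : ℕ), by omega⟩) * X ^ (k : ℕ) with hT
    have happ := (hH s1) ▸ (hH s2) ▸ heq
    have hwA : ∀ i : Fin (m + 1), (Pf * T).coeff (2 * m + 1 - (i : ℕ)) = 0 := by
      intro i
      rw [hPf, hT, stmt4_windowA]
      have h1 := congrFun happ (Fin.castAdd (m + 1) i)
      simp only [Fin.append_left] at h1
      simp only [hsdef, mul_sub, Finset.sum_sub_distrib]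
      rw [h1, sub_self]
    have hwB : ∀ i : Fin (m + 1), (Pg * T).coeff (2 * m + 1 - (i : ℕ)) = 0 := by
      intro i
      rw [hPg, hT, stmt4_windowA]
      have h1 := congrFun happ (Fin.natAdd (m + 1) i)
      simp only [Fin.append_right] at h1
      simp only [hsdef, mul_sub, Finset.sum_sub_distrib]
      rw [h1, sub_self]
    have hWfwin : ∀ t, m + 1 ≤ t → t ≤ 2 * m + 1 → (Pf * T).coeff t = 0 := by
      intro t h1 h2
      have := hwA ⟨2 * m + 1 - t, by omega⟩
      rwa [show 2 * m + 1 - ((⟨2 * m + 1 - t, by omega⟩ : Fin (m + 1)) : ℕ) = t by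
        simp only [Fin.val_mk]; omega] at this
    have hWgwin : ∀ t, m + 1 ≤ t → t ≤ 2 * m + 1 → (Pg * T).coeff t = 0 := by
      intro t h1 h2
      have := hwB ⟨2 * m + 1 - t, by omega⟩
      rwa [show 2 * m + 1 - ((⟨2 * m + 1 - t, by omega⟩ : Fin (m + 1)) : ℕ) = t by
        simp only [Fin.val_mk]; omega] at this
    have hTdeg : T.natDegree ≤ 2 * m + 1 := natDegree_le_iff_coeff_eq_zero.mpr fun N hN => by
      rw [hT, stmt4_coeff_polyOf, dif_neg (by omega)]
    have hMon : (X ^ (2 * m + 2) : K[X]).Monic := monic_X_pow _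
    set rf := (Pf * T) %ₘ X ^ (2 * m + 2) with hrf
    set qf := (Pf * T) /ₘ X ^ (2 * m + 2) with hqf
    set rg := (Pg * T) %ₘ X ^ (2 * m + 2) with hrg
    set qg := (Pg * T) /ₘ X ^ (2 * m + 2) with hqg
    have hWf : Pf * T = rf + X ^ (2 * m + 2) * qf := (modByMonic_add_div _ _).symm
    have hWg : Pg * T = rg + X ^ (2 * m + 2) * qg := (modByMonic_add_div _ _).symm
    have hrdeg : ∀ (W : K[X]), (∀ t, m + 1 ≤ t → t ≤ 2 * m + 1 → W.coeff t = 0) →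
        (W %ₘ X ^ (2 * m + 2)).natDegree ≤ m := by
      intro W hwin
      apply natDegree_le_iff_coeff_eq_zero.mpr
      intro t ht
      by_cases hcase : t < 2 * m + 2
      · have hWsplit : W = W %ₘ X ^ (2 * m + 2) + X ^ (2 * m + 2) * (W /ₘ X ^ (2 * m + 2)) :=
          (modByMonic_add_div _ _).symm
        have h1 : W.coeff t = (W %ₘ X ^ (2 * m + 2)).coeff t := by
          have hz : (X ^ (2 * m + 2) * (W /ₘ X ^ (2 * m + 2))).coeff t = 0 := by
            rw [mul_comm, coeff_mul_X_pow', if_neg (by omega)]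
          conv_lhs => rw [hWsplit]
          rw [coeff_add, hz, add_zero]
        rw [← h1]
        exact hwin t (by omega) (by omega)
      · apply coeff_eq_zero_of_degree_lt
        refine (degree_modByMonic_lt _ hMon).trans_le ?_
        rw [degree_X_pow]
        exact_mod_cast (show 2 * m + 2 <= t by omega)
    have hrfdeg : rf.natDegree ≤ m := hrdeg _ hWfwin
    have hrgdeg : rg.natDegree ≤ m := hrdeg _ hWgwin
    have hqfdeg : qf.natDegree ≤ m := by
      have h2 : (Pf * T).natDegree ≤ 3 * m + 2 := natDegree_mul_le.trans (by omega)
      rw [hqf, natDegree_divByMonic _ hMon, natDegree_X_pow]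
      omega
    have hqgdeg : qg.natDegree ≤ m := by
      have h2 : (Pg * T).natDegree ≤ 3 * m + 2 := natDegree_mul_le.trans (by omega)
      rw [hqg, natDegree_divByMonic _ hMon, natDegree_X_pow]
      omega
    have hmid : Pg * rf - Pf * rg = X ^ (2 * m + 2) * (Pf * qg - Pg * qf) := by
      have hswap : Pg * (Pf * T) = Pf * (Pg * T) := by ring
      rw [hWf, hWg] at hswap
      linear_combination hswap
    have hD0 : Pf * qg - Pg * qf = 0 := by
      by_contra hD
      have h1 : (Pg * rf - Pf * rg).natDegree ≤ 2 * m + 1 := by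
        refine (natDegree_sub_le _ _).trans (max_le ?_ ?_)
        · exact (natDegree_mul_le).trans (by omega)
        · exact (natDegree_mul_le).trans (by omega)
      rw [hmid, natDegree_mul (pow_ne_zero _ X_ne_zero) hD, natDegree_X_pow] at h1
      omega
    have hL0 : Pg * rf = Pf * rg := by
      have := hmid
      rw [hD0, mul_zero] at this
      exact sub_eq_zero.mp this
    have hrf0 : rf = 0 := by
      have hdvd : Pf ∣ rf := hcop.dvd_of_dvd_mul_left ⟨rg, hL0⟩
      exact eq_zero_of_dvd_of_natDegree_lt hdvd (by omega)
    have hqf0 : qf = 0 := by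
      have hdvd : Pf ∣ qf := hcop.dvd_of_dvd_mul_left ⟨qg, (sub_eq_zero.mp hD0).symm⟩
      exact eq_zero_of_dvd_of_natDegree_lt hdvd (by omega)
    have hWf0 : Pf * T = 0 := by rw [hWf, hrf0, hqf0, mul_zero, add_zero]
    have hT0 : T = 0 := by
      rcases mul_eq_zero.mp hWf0 with h | h
      · exact absurd h hPf0
      · exact h
    funext j
    have hj := j.isLt
    have hc : T.coeff (2 * m + 1 - (j : ℕ)) = 0 := by rw [hT0, coeff_zero]
    rw [hT, stmt4_coeff_polyOf, dif_pos (show 2 * m + 1 - (j : ℕ) < (m + 1) + (m + 1) by omega)] at hc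
    have hjj : (⟨2 * m + 1 - (2 * m + 1 - (j : ℕ)), by omega⟩ : Fin ((m + 1) + (m + 1))) = j :=
      Fin.ext (by simp only [Fin.val_mk]; omega)
    rw [hjj] at hc
    exact sub_eq_zero.mp hc
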